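/- Equality in the directional uncertainty principle holds for Gaussian multivector functions: if f(x) = C₀ e^{−k x²} with C₀ ∈ Cl(3,0) a constant multivector and k > 0 (x² = |x|² being the Euclidean squared norm), then for any unit vector a ∈ ℝ³, (∫ (a·x)² ‖f(x)‖² d³x)(∫ (a·ω)² ‖F{f}(ω)‖² d³ω) = (2π)³ F²/4, where F = ∫ ‖f(x)‖² d³x. -/

import Mathlib

open MeasureTheory Real Filter

noncomputable section

/-- The Clifford algebra Cl(3,0) as coefficient vectors over the basis
{1, e₁, e₂, e₃, e₁₂, e₃₁, e₂₃, e₁₂₃} (indices 0,…,7). -/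
abbrev Cl3 : Type := Fin 8 → ℝ

namespace Cl3

/-- Structure constants: e_i * e_j = sign • e_index. -/
def tbl : Fin 8 → Fin 8 → Fin 8 × ℝ :=
  ![![(0, 1), (1, 1), (2, 1), (3, 1), (4, 1), (5, 1), (6, 1), (7, 1)],
    ![(1, 1), (0, 1), (4, 1), (5, -1), (2, 1), (3, -1), (7, 1), (6, 1)],
    ![(2, 1), (4, -1), (0, 1), (6, 1), (1, -1), (7, 1), (3, 1), (5, 1)],
    ![(3, 1), (5, 1), (6, -1), (0, 1), (7, 1), (1, 1), (2, -1), (4, 1)],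
    ![(4, 1), (2, -1), (1, 1), (7, 1), (0, -1), (6, 1), (5, -1), (3, -1)],
    ![(5, 1), (3, 1), (7, 1), (1, -1), (6, -1), (0, -1), (4, 1), (2, -1)],
    ![(6, 1), (7, 1), (3, -1), (2, 1), (5, 1), (4, -1), (0, -1), (1, -1)],
    ![(7, 1), (6, 1), (5, 1), (4, 1), (3, -1), (2, -1), (1, -1), (0, -1)]]

/-- The geometric (Clifford) product on Cl(3,0). -/
def mul (x y : Cl3) : Cl3 := fun k =>
  ∑ i : Fin 8, ∑ j : Fin 8,
    (if (tbl i j).1 = k then (tbl i j).2 else 0) * x i * y j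

/-- The reverse anti-automorphism: negates the grade-2 and grade-3 parts. -/
def reverse (M : Cl3) : Cl3 := fun k => if 4 ≤ k.val then -M k else M k

/-- The scalar (grade-0) part. -/
def scalarPart (M : Cl3) : ℝ := M 0

/-- The square norm ‖M‖² = ⟨M M̃⟩₀. -/
def normSq (M : Cl3) : ℝ := scalarPart (mul M (reverse M))

/-- The identity 1 of Cl(3,0). -/
def one : Cl3 := fun k => if k = 0 then 1 else 0

/-- The unit pseudoscalar i₃ = e₁e₂e₃. -/
def i3 : Cl3 := fun k => if k = 7 then 1 else 0

/-- The orthonormal vector generators e₁, e₂, e₃. -/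
def e (i : Fin 3) : Cl3 := fun k => if k.val = i.val + 1 then 1 else 0

/-- Euclidean inner product on ℝ³. -/
def dot (a b : Fin 3 → ℝ) : ℝ := ∑ i, a i * b i

/-- The kernel e^{−i₃ θ} = cos θ − i₃ sin θ of the Clifford Fourier transform. -/
def expNeg (θ : ℝ) : Cl3 := Real.cos θ • one - Real.sin θ • i3

/-- e^{+i₃ θ} = cos θ + i₃ sin θ. -/
def expPos (θ : ℝ) : Cl3 := Real.cos θ • one + Real.sin θ • i3

/-- The Clifford Fourier transform F{f}(ω) = ∫ f(x) e^{−i₃ ω·x} d³x. -/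
def CFT (f : (Fin 3 → ℝ) → Cl3) (ω : Fin 3 → ℝ) : Cl3 :=
  ∫ x : Fin 3 → ℝ, mul (f x) (expNeg (dot ω x))

/-- Vector differential a·∇f (directional derivative in direction a). -/
def dirDeriv (a : Fin 3 → ℝ) (f : (Fin 3 → ℝ) → Cl3) (x : Fin 3 → ℝ) : Cl3 :=
  fderiv ℝ f x a

/-- Partial derivative ∂ₖ f. -/
def pderiv (k : Fin 3) (f : (Fin 3 → ℝ) → Cl3) (x : Fin 3 → ℝ) : Cl3 :=
  fderiv ℝ f x (Pi.single k 1)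

/-- The vector derivative ∇f = Σₖ eₖ ∂ₖ f. -/
def vecDeriv (f : (Fin 3 → ℝ) → Cl3) (x : Fin 3 → ℝ) : Cl3 :=
  ∑ k : Fin 3, mul (e k) (pderiv k f x)

/-- Convolution of Cl(3,0)-valued functions. -/
def conv (f g : (Fin 3 → ℝ) → Cl3) (x : Fin 3 → ℝ) : Cl3 :=
  ∫ y : Fin 3 → ℝ, mul (f y) (g (x - y))

end Cl3

open Cl3

section UncertaintyHelpers
open Cl3
lemma tbl_00 : tbl 0 0 = ((0 : Fin 8), (1 : ℝ)) := rfl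
lemma tbl_01 : tbl 0 1 = ((1 : Fin 8), (1 : ℝ)) := rfl
lemma tbl_02 : tbl 0 2 = ((2 : Fin 8), (1 : ℝ)) := rfl
lemma tbl_03 : tbl 0 3 = ((3 : Fin 8), (1 : ℝ)) := rfl
lemma tbl_04 : tbl 0 4 = ((4 : Fin 8), (1 : ℝ)) := rfl
lemma tbl_05 : tbl 0 5 = ((5 : Fin 8), (1 : ℝ)) := rfl
lemma tbl_06 : tbl 0 6 = ((6 : Fin 8), (1 : ℝ)) := rfl
lemma tbl_07 : tbl 0 7 = ((7 : Fin 8), (1 : ℝ)) := rfl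
lemma tbl_10 : tbl 1 0 = ((1 : Fin 8), (1 : ℝ)) := rfl
lemma tbl_11 : tbl 1 1 = ((0 : Fin 8), (1 : ℝ)) := rfl
lemma tbl_12 : tbl 1 2 = ((4 : Fin 8), (1 : ℝ)) := rfl
lemma tbl_13 : tbl 1 3 = ((5 : Fin 8), (-1 : ℝ)) := rfl
lemma tbl_14 : tbl 1 4 = ((2 : Fin 8), (1 : ℝ)) := rfl
lemma tbl_15 : tbl 1 5 = ((3 : Fin 8), (-1 : ℝ)) := rfl
lemma tbl_16 : tbl 1 6 = ((7 : Fin 8), (1 : ℝ)) := rfl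
lemma tbl_17 : tbl 1 7 = ((6 : Fin 8), (1 : ℝ)) := rfl
lemma tbl_20 : tbl 2 0 = ((2 : Fin 8), (1 : ℝ)) := rfl
lemma tbl_21 : tbl 2 1 = ((4 : Fin 8), (-1 : ℝ)) := rfl
lemma tbl_22 : tbl 2 2 = ((0 : Fin 8), (1 : ℝ)) := rfl
lemma tbl_23 : tbl 2 3 = ((6 : Fin 8), (1 : ℝ)) := rfl
lemma tbl_24 : tbl 2 4 = ((1 : Fin 8), (-1 : ℝ)) := rfl
lemma tbl_25 : tbl 2 5 = ((7 : Fin 8), (1 : ℝ)) := rfl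
lemma tbl_26 : tbl 2 6 = ((3 : Fin 8), (1 : ℝ)) := rfl
lemma tbl_27 : tbl 2 7 = ((5 : Fin 8), (1 : ℝ)) := rfl
lemma tbl_30 : tbl 3 0 = ((3 : Fin 8), (1 : ℝ)) := rfl
lemma tbl_31 : tbl 3 1 = ((5 : Fin 8), (1 : ℝ)) := rfl
lemma tbl_32 : tbl 3 2 = ((6 : Fin 8), (-1 : ℝ)) := rfl
lemma tbl_33 : tbl 3 3 = ((0 : Fin 8), (1 : ℝ)) := rfl
lemma tbl_34 : tbl 3 4 = ((7 : Fin 8), (1 : ℝ)) := rfl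
lemma tbl_35 : tbl 3 5 = ((1 : Fin 8), (1 : ℝ)) := rfl
lemma tbl_36 : tbl 3 6 = ((2 : Fin 8), (-1 : ℝ)) := rfl
lemma tbl_37 : tbl 3 7 = ((4 : Fin 8), (1 : ℝ)) := rfl
lemma tbl_40 : tbl 4 0 = ((4 : Fin 8), (1 : ℝ)) := rfl
lemma tbl_41 : tbl 4 1 = ((2 : Fin 8), (-1 : ℝ)) := rfl
lemma tbl_42 : tbl 4 2 = ((1 : Fin 8), (1 : ℝ)) := rfl
lemma tbl_43 : tbl 4 3 = ((7 : Fin 8), (1 : ℝ)) := rfl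
lemma tbl_44 : tbl 4 4 = ((0 : Fin 8), (-1 : ℝ)) := rfl
lemma tbl_45 : tbl 4 5 = ((6 : Fin 8), (1 : ℝ)) := rfl
lemma tbl_46 : tbl 4 6 = ((5 : Fin 8), (-1 : ℝ)) := rfl
lemma tbl_47 : tbl 4 7 = ((3 : Fin 8), (-1 : ℝ)) := rfl
lemma tbl_50 : tbl 5 0 = ((5 : Fin 8), (1 : ℝ)) := rfl
lemma tbl_51 : tbl 5 1 = ((3 : Fin 8), (1 : ℝ)) := rfl
lemma tbl_52 : tbl 5 2 = ((7 : Fin 8), (1 : ℝ)) := rfl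
lemma tbl_53 : tbl 5 3 = ((1 : Fin 8), (-1 : ℝ)) := rfl
lemma tbl_54 : tbl 5 4 = ((6 : Fin 8), (-1 : ℝ)) := rfl
lemma tbl_55 : tbl 5 5 = ((0 : Fin 8), (-1 : ℝ)) := rfl
lemma tbl_56 : tbl 5 6 = ((4 : Fin 8), (1 : ℝ)) := rfl
lemma tbl_57 : tbl 5 7 = ((2 : Fin 8), (-1 : ℝ)) := rfl
lemma tbl_60 : tbl 6 0 = ((6 : Fin 8), (1 : ℝ)) := rfl
lemma tbl_61 : tbl 6 1 = ((7 : Fin 8), (1 : ℝ)) := rfl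
lemma tbl_62 : tbl 6 2 = ((3 : Fin 8), (-1 : ℝ)) := rfl
lemma tbl_63 : tbl 6 3 = ((2 : Fin 8), (1 : ℝ)) := rfl
lemma tbl_64 : tbl 6 4 = ((5 : Fin 8), (1 : ℝ)) := rfl
lemma tbl_65 : tbl 6 5 = ((4 : Fin 8), (-1 : ℝ)) := rfl
lemma tbl_66 : tbl 6 6 = ((0 : Fin 8), (-1 : ℝ)) := rfl
lemma tbl_67 : tbl 6 7 = ((1 : Fin 8), (-1 : ℝ)) := rfl
lemma tbl_70 : tbl 7 0 = ((7 : Fin 8), (1 : ℝ)) := rfl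
lemma tbl_71 : tbl 7 1 = ((6 : Fin 8), (1 : ℝ)) := rfl
lemma tbl_72 : tbl 7 2 = ((5 : Fin 8), (1 : ℝ)) := rfl
lemma tbl_73 : tbl 7 3 = ((4 : Fin 8), (1 : ℝ)) := rfl
lemma tbl_74 : tbl 7 4 = ((3 : Fin 8), (-1 : ℝ)) := rfl
lemma tbl_75 : tbl 7 5 = ((2 : Fin 8), (-1 : ℝ)) := rfl
lemma tbl_76 : tbl 7 6 = ((1 : Fin 8), (-1 : ℝ)) := rfl
lemma tbl_77 : tbl 7 7 = ((0 : Fin 8), (-1 : ℝ)) := rfl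

lemma cl3_mul_one (x : Cl3) : mul x one = x := by
  funext m
  simp only [mul, one, Fin.sum_univ_eight, tbl_00, tbl_01, tbl_02, tbl_03, tbl_04, tbl_05, tbl_06, tbl_07, tbl_10, tbl_11, tbl_12, tbl_13, tbl_14, tbl_15, tbl_16, tbl_17, tbl_20, tbl_21, tbl_22, tbl_23, tbl_24, tbl_25, tbl_26, tbl_27, tbl_30, tbl_31, tbl_32, tbl_33, tbl_34, tbl_35, tbl_36, tbl_37, tbl_40, tbl_41, tbl_42, tbl_43, tbl_44, tbl_45, tbl_46, tbl_47, tbl_50, tbl_51, tbl_52, tbl_53, tbl_54, tbl_55, tbl_56, tbl_57, tbl_60, tbl_61, tbl_62, tbl_63, tbl_64, tbl_65, tbl_66, tbl_67, tbl_70, tbl_71, tbl_72, tbl_73, tbl_74, tbl_75, tbl_76, tbl_77]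
  fin_cases m <;> simp

lemma cl3_smul_mul (c : ℝ) (x y : Cl3) : mul (c • x) y = c • mul x y := by
  funext m
  simp only [mul, Pi.smul_apply, smul_eq_mul, Finset.mul_sum]
  refine Finset.sum_congr rfl fun i _ => Finset.sum_congr rfl fun j _ => by ring

lemma cl3_mul_smul (c : ℝ) (x y : Cl3) : mul x (c • y) = c • mul x y := by
  funext m
  simp only [mul, Pi.smul_apply, smul_eq_mul, Finset.mul_sum]
  refine Finset.sum_congr rfl fun i _ => Finset.sum_congr rfl fun j _ => by ring

lemma cl3_mul_sub (x a b : Cl3) : mul x (a - b) = mul x a - mul x b := by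
  funext m
  simp only [mul, Pi.sub_apply, ← Finset.sum_sub_distrib]
  refine Finset.sum_congr rfl fun i _ => Finset.sum_congr rfl fun j _ => by ring

lemma cl3_reverse_smul (c : ℝ) (x : Cl3) : reverse (c • x) = c • reverse x := by
  funext m
  simp only [reverse, Pi.smul_apply, smul_eq_mul]
  split <;> ring

lemma cl3_normSq_smul (c : ℝ) (x : Cl3) : normSq (c • x) = c^2 * normSq x := by
  unfold normSq scalarPart
  rw [cl3_reverse_smul, cl3_smul_mul, cl3_mul_smul, smul_smul]
  simp only [Pi.smul_apply, smul_eq_mul]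
  ring

/-! ### One-dimensional Gaussian integrals -/

lemma J0 {c : ℝ} : ∫ t : ℝ, Real.exp (-(c * t^2)) = √(π/c) := by
  simpa [neg_mul] using integral_gaussian c

lemma J0int {c : ℝ} (hc : 0 < c) : Integrable (fun t : ℝ => Real.exp (-(c * t^2))) := by
  simpa [neg_mul] using integrable_exp_neg_mul_sq hc

lemma J1int {c : ℝ} (hc : 0 < c) : Integrable (fun t : ℝ => t * Real.exp (-(c * t^2))) := by
  simpa [neg_mul] using integrable_mul_exp_neg_mul_sq hc

lemma J1 {c : ℝ} : ∫ t : ℝ, t * Real.exp (-(c * t^2)) = 0 := by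
  have h := MeasureTheory.integral_neg_eq_self (fun t : ℝ => t * Real.exp (-(c * t^2))) volume
  simp only [neg_mul, neg_sq] at h
  have h2 : -∫ t:ℝ, t * Real.exp (-(c * t^2)) = ∫ t:ℝ, t * Real.exp (-(c * t^2)) := by
    rw [← integral_neg]; exact h
  linarith

lemma J2int {c : ℝ} (hc : 0 < c) : Integrable (fun t : ℝ => t^2 * Real.exp (-(c * t^2))) := by
  have hmeas : AEStronglyMeasurable (fun t : ℝ => t^2 * Real.exp (-(c * t^2))) volume :=
    (Continuous.mul (by continuity) (by continuity)).aestronglyMeasurable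
  have hbd : Integrable (fun t : ℝ => 2/c * Real.exp (-(c/2 * t^2))) :=
    (J0int (half_pos hc)).const_mul _
  refine hbd.mono' hmeas ?_
  filter_upwards with t
  rw [Real.norm_eq_abs, abs_of_nonneg (by positivity)]
  have h2 : t^2 * Real.exp (-(c/2 * t^2)) ≤ 2/c := by
    rw [Real.exp_neg, mul_inv_le_iff₀ (Real.exp_pos _)]
    calc t^2 = 2/c * (c/2 * t^2) := by field_simp
      _ ≤ 2/c * Real.exp (c/2 * t^2) := by
          have h3 : c/2 * t^2 ≤ Real.exp (c/2 * t^2) := by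
            linarith [Real.add_one_le_exp (c/2 * t^2)]
          exact mul_le_mul_of_nonneg_left h3 (by positivity)
  have h1 : Real.exp (-(c * t^2)) = Real.exp (-(c/2 * t^2)) * Real.exp (-(c/2 * t^2)) := by
    rw [← Real.exp_add]; ring_nf
  calc t^2 * Real.exp (-(c * t^2))
      = (t^2 * Real.exp (-(c/2 * t^2))) * Real.exp (-(c/2*t^2)) := by rw [h1]; ring
    _ ≤ 2/c * Real.exp (-(c/2 * t^2)) := mul_le_mul_of_nonneg_right h2 (Real.exp_nonneg _)

lemma J2 {c : ℝ} (hc : 0 < c) : ∫ t : ℝ, t^2 * Real.exp (-(c * t^2)) = 1/(2*c) * √(π/c) := by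
  have habs : (fun t : ℝ => t^2 * Real.exp (-(c * t^2)))
      = fun t : ℝ => |t|^2 * Real.exp (-(c * |t|^2)) := by
    funext t; rw [sq_abs]
  rw [habs]
  rw [integral_comp_abs (f := fun t : ℝ => t^2 * Real.exp (-(c * t^2)))]
  have : ∫ t in Set.Ioi (0:ℝ), t^2 * Real.exp (-(c * t^2)) =
      ∫ t in Set.Ioi (0:ℝ), t ^ (2:ℝ) * Real.exp (-c * t ^ (2:ℝ)) := by
    refine setIntegral_congr_fun measurableSet_Ioi (fun t ht => ?_)
    rw [← Real.rpow_natCast t 2]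
    norm_num
  rw [this, integral_rpow_mul_exp_neg_mul_rpow (by norm_num) (by norm_num) hc]
  have hg : Real.Gamma ((2+1)/2) = √π / 2 := by
    have : ((2:ℝ)+1)/2 = 1/2 + 1 := by norm_num
    rw [this, Real.Gamma_add_one (by norm_num), Real.Gamma_one_half_eq]
    ring
  rw [hg]
  have hc' : √c ≠ 0 := by positivity
  have hrpow : c ^ (-((2:ℝ)+1)/2) = (c * √c)⁻¹ := by
    rw [show (-((2:ℝ)+1)/2) = -((1:ℝ) + 1/2) by norm_num, Real.rpow_neg hc.le]
    congr 1
    rw [Real.rpow_add hc, Real.rpow_one, ← Real.sqrt_eq_rpow]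
  rw [hrpow, Real.sqrt_div pi_pos.le]
  field_simp

/-! ### Three-dimensional Gaussian moment integrals -/

lemma exp_dot_prod (c : ℝ) (x : Fin 3 → ℝ) :
    Real.exp (-(c * dot x x)) = ∏ l, Real.exp (-(c * (x l)^2)) := by
  rw [← Real.exp_sum]
  congr 1
  rw [dot, Finset.mul_sum, ← Finset.sum_neg_distrib]
  exact Finset.sum_congr rfl fun l _ => by ring

/-- the one-coordinate factors of the moment integrand -/
def gf (c : ℝ) (i j l : Fin 3) : ℝ → ℝ :=
  fun t => (if l = i then t else 1) * (if l = j then t else 1) * Real.exp (-(c * t^2))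

lemma prod_form (c : ℝ) (i j : Fin 3) (x : Fin 3 → ℝ) :
    x i * x j * Real.exp (-(c * dot x x)) = ∏ l, gf c i j l (x l) := by
  unfold gf
  rw [Finset.prod_mul_distrib, Finset.prod_mul_distrib, exp_dot_prod c x]
  congr 1
  congr 1
  · rw [Finset.prod_ite_eq' Finset.univ i (fun l => x l)]; simp
  · rw [Finset.prod_ite_eq' Finset.univ j (fun l => x l)]; simp

lemma gf_int {c : ℝ} (hc : 0 < c) (i j l : Fin 3) : Integrable (gf c i j l) := by
  unfold gf
  by_cases h1 : l = i <;> by_cases h2 : l = j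
  · simp only [if_pos h1, if_pos h2]
    have : (fun t : ℝ => t * t * Real.exp (-(c * t^2)))
        = fun t : ℝ => t^2 * Real.exp (-(c * t^2)) := by
      funext t; ring
    rw [this]; exact J2int hc
  · simp only [if_pos h1, if_neg h2, mul_one]
    exact J1int hc
  · simp only [if_neg h1, if_pos h2, one_mul]
    exact J1int hc
  · simp only [if_neg h1, if_neg h2, one_mul, mul_one]
    exact J0int hc

lemma momInt {c : ℝ} (hc : 0 < c) (i j : Fin 3) :
    Integrable (fun x : Fin 3 → ℝ => x i * x j * Real.exp (-(c * dot x x))) := by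
  have : (fun x : Fin 3 → ℝ => x i * x j * Real.exp (-(c * dot x x)))
      = fun x : Fin 3 → ℝ => ∏ l, gf c i j l (x l) := funext fun x => prod_form c i j x
  rw [this]
  exact Integrable.fintype_prod (fun l => gf_int hc i j l)

lemma moment {c : ℝ} (hc : 0 < c) (i j : Fin 3) :
    ∫ x : Fin 3 → ℝ, x i * x j * Real.exp (-(c * dot x x)) =
      if i = j then 1/(2*c) * √(π/c) * (π/c) else 0 := by
  have : (fun x : Fin 3 → ℝ => x i * x j * Real.exp (-(c * dot x x)))
      = fun x : Fin 3 → ℝ => ∏ l, gf c i j l (x l) := funext fun x => prod_form c i j x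
  rw [this, MeasureTheory.integral_fintype_prod_volume_eq_prod (fun l => gf c i j l)]
  have hsq : √(π/c) * √(π/c) = π/c := Real.mul_self_sqrt (by positivity)
  have hJ2 : ∫ t : ℝ, t * t * Real.exp (-(c * t^2)) = 1/(2*c) * √(π/c) := by
    simp_rw [← pow_two]
    exact J2 hc
  fin_cases i <;> fin_cases j <;>
    simp [gf, Fin.prod_univ_three, J1] <;>
    rw [hJ2, J0] <;>
    linear_combination (1/(2*c) * √(π/c)) * hsq

lemma main_integral {c : ℝ} (hc : 0 < c) (a : Fin 3 → ℝ) (ha : dot a a = 1) :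
    ∫ x : Fin 3 → ℝ, (dot a x)^2 * Real.exp (-(c * dot x x)) = 1/(2*c) * √(π/c) * (π/c) := by
  have expand : (fun x : Fin 3 → ℝ => (dot a x)^2 * Real.exp (-(c * dot x x)))
      = fun x => ∑ i, ∑ j, a i * a j * (x i * x j * Real.exp (-(c * dot x x))) := by
    funext x
    rw [sq, dot, Finset.sum_mul_sum]
    rw [Finset.sum_mul]
    refine Finset.sum_congr rfl fun i _ => ?_
    rw [Finset.sum_mul]
    exact Finset.sum_congr rfl fun j _ => by ring
  rw [expand]
  rw [integral_finset_sum _ (fun i _ => integrable_finset_sum _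
    (fun j _ => ((momInt hc i j).const_mul (a i * a j))))]
  have : ∀ i ∈ Finset.univ,
      (∫ x : Fin 3 → ℝ, ∑ j, a i * a j * (x i * x j * Real.exp (-(c * dot x x))))
      = a i * a i * (1/(2*c) * √(π/c) * (π/c)) := by
    intro i _
    rw [integral_finset_sum _ (fun j _ => (momInt hc i j).const_mul (a i * a j))]
    have : ∀ j ∈ Finset.univ,
        (∫ x : Fin 3 → ℝ, a i * a j * (x i * x j * Real.exp (-(c * dot x x))))
        = if i = j then a i * a j * (1/(2*c) * √(π/c) * (π/c)) else 0 := by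
      intro j _
      rw [MeasureTheory.integral_const_mul, moment hc i j]
      split <;> simp
    rw [Finset.sum_congr rfl this, Finset.sum_ite_eq Finset.univ i
      (fun j => a i * a j * (1/(2*c) * √(π/c) * (π/c)))]
    simp
  rw [Finset.sum_congr rfl this, ← Finset.sum_mul]
  rw [show ∑ i, a i * a i = 1 from ha ▸ rfl, one_mul]

lemma gauss3int {c : ℝ} (hc : 0 < c) :
    Integrable (fun x : Fin 3 → ℝ => Real.exp (-(c * dot x x))) := by
  have : (fun x : Fin 3 → ℝ => Real.exp (-(c * dot x x)))
      = fun x => ∏ l, Real.exp (-(c * (x l)^2)) := funext (exp_dot_prod c)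
  rw [this]
  exact Integrable.fintype_prod (f := fun (_ : Fin 3) (t : ℝ) => Real.exp (-(c * t^2)))
    (fun _ => J0int hc)

lemma G0 {c : ℝ} : ∫ x : Fin 3 → ℝ, Real.exp (-(c * dot x x)) = √(π/c)^3 := by
  have : (fun x : Fin 3 → ℝ => Real.exp (-(c * dot x x)))
      = fun x => ∏ l, Real.exp (-(c * (x l)^2)) := funext (exp_dot_prod c)
  rw [this, MeasureTheory.integral_fintype_prod_volume_eq_pow
    (fun t : ℝ => Real.exp (-(c * t^2))), J0]
  norm_num

/-! ### The Fourier transform of the Gaussian -/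

lemma fourier_gauss {k : ℝ} (hk : 0 < k) (ω : Fin 3 → ℝ) :
    (∫ x : Fin 3 → ℝ, Real.exp (-(k * dot x x)) * Real.cos (dot ω x))
      = (π/k)^((3:ℝ)/2) * Real.exp (-(1/(4*k) * dot ω ω)) ∧
    (∫ x : Fin 3 → ℝ, Real.exp (-(k * dot x x)) * Real.sin (dot ω x)) = 0 := by
  set z : (Fin 3 → ℝ) → ℂ :=
    fun x => -(k:ℂ) * ∑ i, (x i:ℂ)^2 + ∑ i, (-(ω i):ℂ) * Complex.I * (x i:ℂ) with hzdef
  have e1 : ∀ x : Fin 3 → ℝ, -(k:ℂ) * ∑ i, (x i:ℂ)^2 = ((-(k * dot x x) : ℝ) : ℂ) := by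
    intro x
    push_cast [dot]
    rw [neg_mul, Finset.mul_sum, Finset.mul_sum]
    congr 1
    exact Finset.sum_congr rfl fun i _ => by ring
  have e2 : ∀ x : Fin 3 → ℝ, (∑ i, (-(ω i):ℂ) * Complex.I * (x i:ℂ))
      = ((-(dot ω x) : ℝ) : ℂ) * Complex.I := by
    intro x
    push_cast [dot]
    rw [neg_mul, Finset.sum_mul, ← Finset.sum_neg_distrib]
    exact Finset.sum_congr rfl fun i _ => by ring
  have hz : ∀ x : Fin 3 → ℝ,
      z x = ((-(k * dot x x) : ℝ) : ℂ) + ((-(dot ω x) : ℝ) : ℂ) * Complex.I := by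
    intro x
    rw [hzdef]
    simp only []
    rw [e1 x, e2 x]
  have hre : ∀ x : Fin 3 → ℝ, (Complex.exp (z x)).re
      = Real.exp (-(k * dot x x)) * Real.cos (dot ω x) := by
    intro x
    rw [Complex.exp_re, hz]
    simp [Real.cos_neg]
  have him : ∀ x : Fin 3 → ℝ, (Complex.exp (z x)).im
      = -(Real.exp (-(k * dot x x)) * Real.sin (dot ω x)) := by
    intro x
    rw [Complex.exp_im, hz]
    simp [Real.sin_neg]
  have hprod : (fun x : Fin 3 → ℝ => Complex.exp (z x))
      = fun x => ∏ i, Complex.exp (-(k:ℂ) * (x i:ℂ)^2 + (-(ω i):ℂ) * Complex.I * (x i:ℂ)) := by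
    funext x
    rw [← Complex.exp_sum]
    simp only [hzdef]
    congr 1
    rw [Finset.sum_add_distrib, Finset.mul_sum]
  have hint : Integrable (fun x : Fin 3 → ℝ => Complex.exp (z x)) := by
    rw [hprod]
    refine Integrable.fintype_prod
      (f := fun i (t:ℝ) => Complex.exp (-(k:ℂ) * (t:ℂ)^2 + (-(ω i):ℂ) * Complex.I * (t:ℂ)))
      (fun i => ?_)
    simpa using integrable_cexp_quadratic (by simpa using hk : 0 < ((k:ℂ)).re)
      ((-(ω i):ℂ) * Complex.I) 0
  have hval : (∫ x : Fin 3 → ℝ, Complex.exp (z x))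
      = (((π/k)^((3:ℝ)/2) * Real.exp (-(1/(4*k) * dot ω ω)) : ℝ) : ℂ) := by
    simp only [hzdef]
    rw [GaussianFourier.integral_cexp_neg_mul_sum_add (by simpa using hk)
      (fun i => (-(ω i):ℂ) * Complex.I)]
    have h1 : (∑ i, ((-(ω i):ℂ) * Complex.I)^2) = ((-(dot ω ω) : ℝ) : ℂ) := by
      push_cast [dot]
      rw [← Finset.sum_neg_distrib]
      refine Finset.sum_congr rfl fun i _ => ?_
      rw [mul_pow, Complex.I_sq]
      ring
    rw [h1]
    have h2 : ((π:ℂ) / (k:ℂ)) ^ ((Fintype.card (Fin 3) : ℂ) / 2)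
        = (((π/k)^((3:ℝ)/2) : ℝ) : ℂ) := by
      rw [← Complex.ofReal_div, Complex.ofReal_cpow (by positivity) ((3:ℝ)/2)]
      congr 1
      · norm_num
    have h3 : (((-(dot ω ω) : ℝ) : ℂ) / (4 * (k:ℂ))) = ((-(1/(4*k) * dot ω ω) : ℝ) : ℂ) := by
      push_cast
      field_simp
      try ring
    rw [h2, h3, ← Complex.ofReal_exp, ← Complex.ofReal_mul]
  constructor
  · have hI := integral_re hint
    simp only [RCLike.re_to_complex] at hI
    calc (∫ x : Fin 3 → ℝ, Real.exp (-(k * dot x x)) * Real.cos (dot ω x))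
        = ∫ x : Fin 3 → ℝ, (Complex.exp (z x)).re := by
          congr 1; funext x; rw [hre]
      _ = (∫ x : Fin 3 → ℝ, Complex.exp (z x)).re := hI
      _ = _ := by rw [hval, Complex.ofReal_re]
  · have hI := integral_im hint
    simp only [RCLike.im_to_complex] at hI
    have h4 : (∫ x : Fin 3 → ℝ, (Complex.exp (z x)).im) = 0 := by
      rw [hI, hval, Complex.ofReal_im]
    have h5 : (∫ x : Fin 3 → ℝ, (Complex.exp (z x)).im)
        = -∫ x : Fin 3 → ℝ, Real.exp (-(k * dot x x)) * Real.sin (dot ω x) := by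
      rw [← MeasureTheory.integral_neg]
      congr 1; funext x; rw [him]
    linarith [h5 ▸ h4]

end UncertaintyHelpers

/-- Equality in the uncertainty principle for Gaussian multivector functions. -/
theorem CFT_uncertainty_gaussian (C₀ : Cl3) (k : ℝ) (hk : 0 < k)
    (a : Fin 3 → ℝ) (ha : dot a a = 1)
    (f : (Fin 3 → ℝ) → Cl3) (hf : f = fun x => Real.exp (-(k * dot x x)) • C₀)
    (F : ℝ) (hF : ∫ x : Fin 3 → ℝ, normSq (f x) = F) :
    (∫ x : Fin 3 → ℝ, (dot a x)^2 * normSq (f x)) *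
      (∫ ω : Fin 3 → ℝ, (dot a ω)^2 * normSq (CFT f ω)) =
      (2 * π)^3 / 4 * F^2 := by
  have hk2 : 0 < 2*k := by linarith
  have hk2' : 0 < 1/(2*k) := by positivity
  set N := normSq C₀ with hN
  have hnf : ∀ x : Fin 3 → ℝ, normSq (f x) = Real.exp (-(2*k * dot x x)) * N := by
    intro x
    simp only [hf]
    rw [cl3_normSq_smul]
    congr 1
    rw [sq, ← Real.exp_add]
    congr 1
    ring
  -- the position-space integral
  have hxint : (∫ x : Fin 3 → ℝ, (dot a x)^2 * normSq (f x))
      = (1/(2*(2*k)) * √(π/(2*k)) * (π/(2*k))) * N := by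
    have h : (fun x : Fin 3 → ℝ => (dot a x)^2 * normSq (f x))
        = fun x => ((dot a x)^2 * Real.exp (-(2*k * dot x x))) * N := by
      funext x; rw [hnf x]; ring
    rw [h, MeasureTheory.integral_mul_const, main_integral hk2 a ha]
  -- the total energy F
  have hFv : F = √(π/(2*k))^3 * N := by
    rw [← hF]
    have h : (fun x : Fin 3 → ℝ => normSq (f x))
        = fun x => Real.exp (-(2*k * dot x x)) * N := funext hnf
    rw [h, MeasureTheory.integral_mul_const, G0]
  -- the Clifford-Fourier transform of f
  have hcont1 : ∀ ω : Fin 3 → ℝ, Continuous (fun x : Fin 3 → ℝ => dot ω x) := by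
    intro ω
    unfold dot
    exact continuous_finset_sum _ (fun i _ => continuous_const.mul (continuous_apply i))
  have hcont2 : Continuous (fun x : Fin 3 → ℝ => dot x x) :=
    continuous_finset_sum _ (fun i _ => (continuous_apply i).mul (continuous_apply i))
  have h1i : ∀ ω : Fin 3 → ℝ,
      Integrable (fun x : Fin 3 → ℝ => Real.exp (-(k * dot x x)) * Real.cos (dot ω x)) := by
    intro ω
    refine (gauss3int hk).mono' ?_ ?_
    · exact ((Real.continuous_exp.comp ((continuous_const.mul hcont2).neg)).mul
        (Real.continuous_cos.comp (hcont1 ω))).aestronglyMeasurable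
    · filter_upwards with x
      rw [Real.norm_eq_abs, abs_mul]
      calc |Real.exp (-(k*dot x x))| * |Real.cos (dot ω x)|
          ≤ |Real.exp (-(k*dot x x))| * 1 :=
            mul_le_mul_of_nonneg_left (Real.abs_cos_le_one _) (abs_nonneg _)
        _ = Real.exp (-(k*dot x x)) := by rw [mul_one, abs_of_pos (Real.exp_pos _)]
  have h2i : ∀ ω : Fin 3 → ℝ,
      Integrable (fun x : Fin 3 → ℝ => Real.exp (-(k * dot x x)) * Real.sin (dot ω x)) := by
    intro ω
    refine (gauss3int hk).mono' ?_ ?_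
    · exact ((Real.continuous_exp.comp ((continuous_const.mul hcont2).neg)).mul
        (Real.continuous_sin.comp (hcont1 ω))).aestronglyMeasurable
    · filter_upwards with x
      rw [Real.norm_eq_abs, abs_mul]
      calc |Real.exp (-(k*dot x x))| * |Real.sin (dot ω x)|
          ≤ |Real.exp (-(k*dot x x))| * 1 :=
            mul_le_mul_of_nonneg_left (Real.abs_sin_le_one _) (abs_nonneg _)
        _ = Real.exp (-(k*dot x x)) := by rw [mul_one, abs_of_pos (Real.exp_pos _)]
  have hCFT : ∀ ω : Fin 3 → ℝ,
      CFT f ω = ((π/k)^((3:ℝ)/2) * Real.exp (-(1/(4*k) * dot ω ω))) • C₀ := by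
    intro ω
    have hptw : ∀ x : Fin 3 → ℝ, mul (f x) (expNeg (dot ω x))
        = (Real.exp (-(k * dot x x)) * Real.cos (dot ω x)) • C₀
          - (Real.exp (-(k * dot x x)) * Real.sin (dot ω x)) • (mul C₀ i3) := by
      intro x
      simp only [hf]
      rw [cl3_smul_mul]
      rw [show expNeg (dot ω x)
          = Real.cos (dot ω x) • one - Real.sin (dot ω x) • i3 from rfl]
      rw [cl3_mul_sub, cl3_mul_smul, cl3_mul_smul, cl3_mul_one, smul_sub, smul_smul, smul_smul]
    calc CFT f ω = ∫ x : Fin 3 → ℝ,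
          ((Real.exp (-(k * dot x x)) * Real.cos (dot ω x)) • C₀
            - (Real.exp (-(k * dot x x)) * Real.sin (dot ω x)) • (mul C₀ i3)) := by
          unfold CFT
          congr 1
          funext x
          exact hptw x
      _ = (∫ x : Fin 3 → ℝ, (Real.exp (-(k * dot x x)) * Real.cos (dot ω x)) • C₀)
          - ∫ x : Fin 3 → ℝ, (Real.exp (-(k * dot x x)) * Real.sin (dot ω x)) • (mul C₀ i3) :=
          integral_sub ((h1i ω).smul_const _) ((h2i ω).smul_const _)
      _ = (∫ x : Fin 3 → ℝ, Real.exp (-(k * dot x x)) * Real.cos (dot ω x)) • C₀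
          - (∫ x : Fin 3 → ℝ, Real.exp (-(k * dot x x)) * Real.sin (dot ω x)) • (mul C₀ i3) := by
          rw [integral_smul_const, integral_smul_const]
      _ = ((π/k)^((3:ℝ)/2) * Real.exp (-(1/(4*k) * dot ω ω))) • C₀ := by
          rw [(fourier_gauss hk ω).1, (fourier_gauss hk ω).2, zero_smul, sub_zero]
  have hnC : ∀ ω : Fin 3 → ℝ, normSq (CFT f ω)
      = ((π/k)^((3:ℝ)/2))^2 * Real.exp (-(1/(2*k) * dot ω ω)) * N := by
    intro ω
    rw [hCFT ω, cl3_normSq_smul, mul_pow]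
    congr 2
    rw [sq, ← Real.exp_add]
    congr 1
    field_simp
    ring
  -- the frequency-space integral
  have homint : (∫ ω : Fin 3 → ℝ, (dot a ω)^2 * normSq (CFT f ω))
      = ((π/k)^((3:ℝ)/2))^2
        * ((1/(2*(1/(2*k))) * √(π/(1/(2*k))) * (π/(1/(2*k)))) * N) := by
    have h : (fun ω : Fin 3 → ℝ => (dot a ω)^2 * normSq (CFT f ω))
        = fun ω => ((π/k)^((3:ℝ)/2))^2
            * (((dot a ω)^2 * Real.exp (-(1/(2*k) * dot ω ω))) * N) := by
      funext ω; rw [hnC ω]; ring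
    rw [h, MeasureTheory.integral_const_mul, MeasureTheory.integral_mul_const,
      main_integral hk2' a ha]
  -- final arithmetic
  rw [hxint, homint, hFv]
  have hP : ((π/k)^((3:ℝ)/2))^2 = (π/k)^(3:ℕ) := by
    rw [← Real.rpow_natCast ((π/k)^((3:ℝ)/2)) 2, ← Real.rpow_mul (by positivity)]
    norm_num
  have hs1 : √(π/(2*k))^2 = π/(2*k) := Real.sq_sqrt (by positivity)
  have hs12 : √(π/(2*k)) * √(2*k*π) = π := by
    rw [← Real.sqrt_mul (by positivity)]
    rw [show π/(2*k) * (2*k*π) = π^2 by field_simp]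
    exact Real.sqrt_sq pi_pos.le
  have hab : (1/(2*(2*k)) * √(π/(2*k)) * (π/(2*k)))
      * ((π/k)^(3:ℕ) * (1/(2*(1/(2*k))) * √(π/(1/(2*k))) * (π/(1/(2*k)))))
      = π^6/(4*k^3) := by
    have hk0 : k ≠ 0 := hk.ne'
    have c1 : (1:ℝ)/(2*(1/(2*k))) = k := by field_simp
    have c2 : π/(1/(2*k)) = 2*k*π := by field_simp
    rw [c1, c2]
    set s1 := √(π/(2*k)) with hs1def
    set s2 := √(2*k*π) with hs2def
    field_simp
    linear_combination 4 * hs12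
  calc (1/(2*(2*k)) * √(π/(2*k)) * (π/(2*k)) * N)
      * (((π/k)^((3:ℝ)/2))^2 * (1/(2*(1/(2*k))) * √(π/(1/(2*k))) * (π/(1/(2*k))) * N))
      = ((1/(2*(2*k)) * √(π/(2*k)) * (π/(2*k)))
        * (((π/k)^((3:ℝ)/2))^2 * (1/(2*(1/(2*k))) * √(π/(1/(2*k))) * (π/(1/(2*k)))))) * N^2 := by
        ring
    _ = (π^6/(4*k^3)) * N^2 := by rw [hP, ← mul_assoc ((π/k)^(3:ℕ)), ← hab]; ring
    _ = (2*π)^3/4 * (√(π/(2*k))^3 * N)^2 := by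
        rw [show (√(π/(2*k))^3 * N)^2 = (√(π/(2*k))^2)^3 * N^2 by ring, hs1]
        field_simp
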